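/- Let Ω ⊆ ℝ² be open, u : Ω → ℝ be C¹, F : Ω → ℝ² be a C¹ vector field, and assume D := |∇u + F| ≠ 0 everywhere on Ω. Then for every p ∈ Ω there exists r₁ > 0 with B_{r₁}(p) ⊆ Ω such that characteristic curves through p are unique in B_{r₁}(p): for every interval I containing 0 and any two differentiable curves γ₁, γ₂ : I → B_{r₁}(p) with γ₁(0) = γ₂(0) = p and γᵢ′(σ) = N^{u,⊥}(γᵢ(σ)) for all σ ∈ I (i = 1,2), one has γ₁ = γ₂ on I. (No condition on any prescribed curvature H is needed.) -/

import Mathlib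

set_option maxHeartbeats 1000000

open MeasureTheory

/-- `∇u + F` as a vector field on `ℝ²`. -/
noncomputable def gradW (u : ℝ × ℝ → ℝ) (F : ℝ × ℝ → ℝ × ℝ) (p : ℝ × ℝ) : ℝ × ℝ :=
  (fderiv ℝ u p (1, 0) + (F p).1, fderiv ℝ u p (0, 1) + (F p).2)

/-- `D = |∇u + F|` (Euclidean norm). -/
noncomputable def Dd (u : ℝ × ℝ → ℝ) (F : ℝ × ℝ → ℝ × ℝ) (p : ℝ × ℝ) : ℝ :=
  Real.sqrt ((gradW u F p).1 ^ 2 + (gradW u F p).2 ^ 2)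

/-- The unit horizontal normal `N^u = (∇u + F)/D`. -/
noncomputable def Nu (u : ℝ × ℝ → ℝ) (F : ℝ × ℝ → ℝ × ℝ) (p : ℝ × ℝ) : ℝ × ℝ :=
  ((gradW u F p).1 / Dd u F p, (gradW u F p).2 / Dd u F p)

/-- `N^{u,⊥}`: rotation of `N^u` by `-π/2`. -/
noncomputable def Nperp (u : ℝ × ℝ → ℝ) (F : ℝ × ℝ → ℝ × ℝ) (p : ℝ × ℝ) : ℝ × ℝ :=
  ((Nu u F p).2, -(Nu u F p).1)

open Set Filter Topology



/-- planar dot product -/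
def dot2 (a b : ℝ × ℝ) : ℝ := a.1 * b.1 + a.2 * b.2

/-- squared euclidean norm -/
def nsq (a : ℝ × ℝ) : ℝ := dot2 a a

lemma nsq_nonneg (a : ℝ × ℝ) : 0 ≤ nsq a := by
  unfold nsq dot2; nlinarith [sq_nonneg a.1, sq_nonneg a.2]

lemma sq_dot2_le (a b : ℝ × ℝ) : (dot2 a b)^2 ≤ nsq a * nsq b := by
  unfold nsq dot2; nlinarith [sq_nonneg (a.1*b.2 - a.2*b.1)]

lemma abs_dot2_le (a b : ℝ × ℝ) : |dot2 a b| ≤ Real.sqrt (nsq a) * Real.sqrt (nsq b) := by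
  have h := sq_dot2_le a b
  have h2 : |dot2 a b| = Real.sqrt ((dot2 a b)^2) := (Real.sqrt_sq_eq_abs _).symm
  rw [h2, ← Real.sqrt_mul (nsq_nonneg a)]
  exact Real.sqrt_le_sqrt h

/-- abs bound from squared bound -/
lemma abs_dot2_le_of_nsq_le {a b : ℝ × ℝ} {C c : ℝ} (ha : nsq a ≤ C^2) (hC : 0 ≤ C)
    (hb : nsq b ≤ c^2) (hc : 0 ≤ c) : |dot2 a b| ≤ C * c := by
  have := abs_dot2_le a b
  have h1 : Real.sqrt (nsq a) ≤ C := by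
    rw [show C = Real.sqrt (C^2) by rw [Real.sqrt_sq hC]]
    exact Real.sqrt_le_sqrt ha
  have h2 : Real.sqrt (nsq b) ≤ c := by
    rw [show c = Real.sqrt (c^2) by rw [Real.sqrt_sq hc]]
    exact Real.sqrt_le_sqrt hb
  nlinarith [Real.sqrt_nonneg (nsq a), Real.sqrt_nonneg (nsq b)]

section Frame
variable {e n : ℝ × ℝ} (he : nsq e = 1) (hn : nsq n = 1) (hen : dot2 e n = 0)

include he hn hen in
lemma frame_col1 : e.1^2 + n.1^2 = 1 ∧ e.2^2 + n.2^2 = 1 ∧ e.1*e.2 + n.1*n.2 = 0 := by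
  unfold nsq dot2 at he hn
  unfold dot2 at hen
  set t := e.1*n.2 - e.2*n.1 with ht
  have h1 : n.1 = -t*e.2 := by linear_combination e.1 * hen - n.1 * he
  have h2 : n.2 = t*e.1 := by linear_combination e.2 * hen - n.2 * he
  have ht2 : t^2 = 1 := by
    have : t^2 = (e.1*e.1+e.2*e.2)*(n.1*n.1+n.2*n.2) - (e.1*n.1+e.2*n.2)^2 := by ring
    rw [this, he, hn, hen]; ring
  have hn1 : n.1^2 = e.2^2 := by rw [h1]; linear_combination e.2^2 * ht2
  have hn2 : n.2^2 = e.1^2 := by rw [h2]; linear_combination e.1^2 * ht2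
  have hn12 : n.1*n.2 = -(e.1*e.2) := by rw [h1, h2]; linear_combination (-(e.1*e.2)) * ht2
  refine ⟨by linear_combination hn1 + he, by linear_combination hn2 + he, by linear_combination hn12⟩

include he hn hen in
lemma frame_decomp (v : ℝ × ℝ) : v = dot2 v e • e + dot2 v n • n := by
  obtain ⟨c1, c2, c12⟩ := frame_col1 he hn hen
  have : ∀ x y : ℝ × ℝ, x.1 = y.1 → x.2 = y.2 → x = y := fun x y h1 h2 => Prod.ext h1 h2
  apply this
  · show v.1 = dot2 v e * e.1 + dot2 v n * n.1
    unfold dot2; linear_combination (-v.1) * c1 + (-v.2) * c12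
  · show v.2 = dot2 v e * e.2 + dot2 v n * n.2
    unfold dot2; linear_combination (-v.2) * c2 + (-v.1) * c12

end Frame

/-- euclidean balls are convex -/
lemma ball_convex {p a b : ℝ × ℝ} {r : ℝ} (ha : nsq (a - p) < r^2) (hb : nsq (b - p) < r^2)
    {s : ℝ} (hs0 : 0 ≤ s) (hs1 : s ≤ 1) : nsq (a + s • (b - a) - p) < r^2 := by
  have : a + s • (b - a) - p = (a - p) + s • ((b-p) - (a-p)) := by
    simp [smul_sub]; abel
  rw [this]
  set v := a - p; set w := b - p
  show nsq (v + s • (w - v)) < r^2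
  have expand : nsq (v + s • (w - v)) = (1-s)*nsq v + s*nsq w - s*(1-s)*nsq (w - v) := by
    unfold nsq dot2; simp [Prod.smul_def, smul_eq_mul]; ring
  rw [expand]
  have hk : 0 ≤ s*(1-s)*nsq (w - v) :=
    mul_nonneg (mul_nonneg hs0 (by linarith)) (nsq_nonneg _)
  rcases lt_or_ge s 1 with h | h
  · have h1 : (1-s)*nsq v < (1-s)*r^2 := by
      apply mul_lt_mul_of_pos_left ha; linarith
    have h2 : s*nsq w ≤ s*r^2 := mul_le_mul_of_nonneg_left hb.le hs0
    nlinarith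
  · have hs : s = 1 := le_antisymm hs1 h
    rw [hs]; linarith [hb]


lemma hasDerivWithinAt_inv_fun {f g : ℝ → ℝ} {s t : Set ℝ} {a ξ : ℝ}
    (hξ : ξ ∈ t) (hmaps : ∀ η ∈ t, g η ∈ s) (hfg : ∀ η ∈ t, f (g η) = η)
    (hcont : ContinuousWithinAt g t ξ)
    (hf : HasDerivWithinAt f a s (g ξ)) (ha : a ≠ 0) :
    HasDerivWithinAt g a⁻¹ t ξ := by
  rw [hasDerivWithinAt_iff_tendsto_slope] at hf ⊢
  have hg_t : Tendsto g (𝓝[t \ {ξ}] ξ) (𝓝[s \ {g ξ}] (g ξ)) := by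
    rw [tendsto_nhdsWithin_iff]
    constructor
    · exact (hcont.mono diff_subset)
    · filter_upwards [self_mem_nhdsWithin] with η hη
      refine ⟨hmaps _ hη.1, ?_⟩
      intro heq
      apply hη.2
      have : f (g η) = f (g ξ) := by rw [heq]
      rw [hfg _ hη.1, hfg _ hξ] at this
      exact this
  have comp : Tendsto (fun η => slope f (g ξ) (g η)) (𝓝[t \ {ξ}] ξ) (𝓝 a) := hf.comp hg_t
  have hinv := comp.inv₀ ha
  apply hinv.congr'
  filter_upwards [self_mem_nhdsWithin] with η hη
  have h1 : f (g η) = η := hfg _ hη.1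
  have h2 : f (g ξ) = ξ := hfg _ hξ
  show (slope f (g ξ) (g η))⁻¹ = slope g ξ η
  rw [slope_def_field, slope_def_field, h1, h2]
  rw [inv_div]



lemma dot2_sub_left (a b w : ℝ × ℝ) : dot2 (a - b) w = dot2 a w - dot2 b w := by
  simp only [dot2, Prod.fst_sub, Prod.snd_sub]; ring

lemma dot2_smul_left (t : ℝ) (a w : ℝ × ℝ) : dot2 (t • a) w = t * dot2 a w := by
  simp only [dot2, Prod.smul_fst, Prod.smul_snd, smul_eq_mul]; ring

lemma nsq_smul (t : ℝ) (a : ℝ × ℝ) : nsq (t • a) = t^2 * nsq a := by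
  simp only [nsq, dot2, Prod.smul_fst, Prod.smul_snd, smul_eq_mul]; ring

lemma nsq_neg (a : ℝ × ℝ) : nsq (-a) = nsq a := by
  simp only [nsq, dot2, Prod.fst_neg, Prod.snd_neg]; ring

lemma dot2_decomp {e n : ℝ × ℝ} (he : nsq e = 1) (hn : nsq n = 1) (hen : dot2 e n = 0)
    (w v : ℝ × ℝ) : dot2 w v = dot2 v e * dot2 w e + dot2 v n * dot2 w n := by
  have hv := frame_decomp he hn hen v
  calc dot2 w v = dot2 w (dot2 v e • e + dot2 v n • n) := by rw [← hv]
  _ = dot2 v e * dot2 w e + dot2 v n * dot2 w n := by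
    simp only [dot2, Prod.fst_add, Prod.snd_add, Prod.smul_fst, Prod.smul_snd, smul_eq_mul]; ring

lemma hasDerivAt_dot2 {γ : ℝ → ℝ × ℝ} {v : ℝ × ℝ} {σ : ℝ} (w : ℝ × ℝ)
    (h : HasDerivAt γ v σ) :
    HasDerivAt (fun t => dot2 (γ t) w) (dot2 v w) σ := by
  have hf : HasDerivAt (fun t => (γ t).1) v.1 σ := h.fst
  have hs : HasDerivAt (fun t => (γ t).2) v.2 σ := h.snd
  simp only [dot2]; exact (hf.mul_const w.1).add (hs.mul_const w.2)

lemma hasDerivWithinAt_dot2' {γ : ℝ → ℝ × ℝ} {v : ℝ × ℝ} {s : Set ℝ} {σ : ℝ} (w : ℝ × ℝ)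
    (h : HasDerivWithinAt γ v s σ) :
    HasDerivWithinAt (fun t => dot2 (γ t) w) (dot2 v w) s σ := by
  have hf : HasDerivWithinAt (fun t => (γ t).1) v.1 s σ := h.fst
  have hs : HasDerivWithinAt (fun t => (γ t).2) v.2 s σ := h.snd
  simp only [dot2]; exact (hf.mul_const w.1).add (hs.mul_const w.2)

lemma vertical_bound
    (p n c : ℝ × ℝ) (r d : ℝ)
    (B : Set (ℝ × ℝ)) (hBdef : B = {q : ℝ × ℝ | nsq (q - p) < r^2})
    (u : ℝ × ℝ → ℝ) (Du : (ℝ × ℝ) → (ℝ × ℝ) →L[ℝ] ℝ)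
    (hDu : ∀ q ∈ B, HasFDerivAt u (Du q) q)
    (hvert : ∀ q ∈ B, d/2 ≤ Du q n + dot2 n c)
    (q : ℝ × ℝ) (hq : q ∈ B) (δ : ℝ) (hq' : q + δ • n ∈ B) :
    d/2 * |δ| ≤ |(u (q + δ • n) + dot2 (q + δ • n) c) - (u q + dot2 q c)| := by
  have haux : ∀ q ∈ B, ∀ δ : ℝ, 0 ≤ δ → q + δ • n ∈ B →
      d/2 * δ ≤ (u (q + δ • n) + dot2 (q + δ • n) c) - (u q + dot2 q c) := by
    intro q hq δ hδ hq'
    have hmem : ∀ s ∈ Icc (0:ℝ) δ, q + s • n ∈ B := by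
      intro s hs
      rcases eq_or_lt_of_le hδ with h0 | h0
      · have : s = 0 := le_antisymm (h0 ▸ hs.2) hs.1
        simpa [this] using hq
      · rw [hBdef] at hq hq' ⊢
        have hconv := ball_convex hq hq' (div_nonneg hs.1 h0.le)
          ((div_le_one h0).mpr hs.2)
        have heq : q + (s/δ) • (q + δ • n - q) = q + s • n := by
          rw [add_sub_cancel_left, smul_smul, div_mul_cancel₀ _ (ne_of_gt h0)]
        rwa [heq] at hconv
    have hφd : ∀ s ∈ Icc (0:ℝ) δ,
        HasDerivAt (fun s => u (q + s • n) + dot2 (q + s • n) c - d/2 * s)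
          (Du (q + s • n) n + dot2 n c - d/2) s := by
      intro s hs
      have hψ : HasDerivAt (fun s : ℝ => q + s • n) n s := by
        simpa using ((hasDerivAt_id s).smul_const n).const_add q
      have hu : HasDerivAt (fun s => u (q + s • n)) (Du (q + s • n) n) s :=
        (hDu _ (hmem s hs)).comp_hasDerivAt s hψ
      have hdc : HasDerivAt (fun s => dot2 (q + s • n) c) (dot2 n c) s :=
        hasDerivAt_dot2 c hψ
      have hlin : HasDerivAt (fun s : ℝ => d/2 * s) (d/2) s := by
        simpa using (hasDerivAt_id s).const_mul (d/2)
      exact (hu.add hdc).sub hlin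
    have hm : MonotoneOn (fun s => u (q + s • n) + dot2 (q + s • n) c - d/2 * s)
        (Icc (0:ℝ) δ) := by
      apply monotoneOn_of_deriv_nonneg (convex_Icc 0 δ)
      · exact fun s hs => (hφd s hs).continuousAt.continuousWithinAt
      · intro s hs
        rw [interior_Icc] at hs
        exact (hφd s (Ioo_subset_Icc_self hs)).differentiableAt.differentiableWithinAt
      · intro s hs
        rw [interior_Icc] at hs
        have hs' := Ioo_subset_Icc_self hs
        rw [(hφd s hs').deriv]
        linarith [hvert _ (hmem s hs')]
    have := hm (left_mem_Icc.mpr hδ) (right_mem_Icc.mpr hδ) hδ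
    simp only [zero_smul, add_zero, mul_zero] at this
    linarith
  rcases le_or_gt 0 δ with hδ | hδ
  · have := haux q hq δ hδ hq'
    rw [abs_of_nonneg hδ]
    calc d/2 * δ ≤ (u (q + δ • n) + dot2 (q + δ • n) c) - (u q + dot2 q c) := this
    _ ≤ |(u (q + δ • n) + dot2 (q + δ • n) c) - (u q + dot2 q c)| := le_abs_self _
  · have hcomb : (q + δ • n) + (-δ) • n = q := by
      rw [add_assoc, ← add_smul]; simp
    have := haux (q + δ • n) hq' (-δ) (by linarith) (by rw [hcomb]; exact hq)
    rw [hcomb] at this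
    rw [abs_of_neg hδ, abs_sub_comm]
    calc d/2 * (-δ) ≤ (u q + dot2 q c) - (u (q + δ • n) + dot2 (q + δ • n) c) := this
    _ ≤ |(u q + dot2 q c) - (u (q + δ • n) + dot2 (q + δ • n) c)| := le_abs_self _



lemma hasDerivWithinAt_dot2_sub {γ : ℝ → ℝ × ℝ} {v : ℝ × ℝ} {s : Set ℝ} {σ : ℝ}
    (p w : ℝ × ℝ) (h : HasDerivWithinAt γ v s σ) :
    HasDerivWithinAt (fun t => dot2 (γ t - p) w) (dot2 v w) s σ := by
  have hf : HasDerivWithinAt (fun t => (γ t).1) v.1 s σ := h.fst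
  have hs : HasDerivWithinAt (fun t => (γ t).2) v.2 s σ := h.snd
  have h1 := (hf.sub_const p.1).mul_const w.1
  have h2 := (hs.sub_const p.2).mul_const w.2
  simp only [dot2]; exact h1.add h2

lemma curve_package
    (p e : ℝ × ℝ) (B : Set (ℝ × ℝ))
    (V : ℝ × ℝ → ℝ × ℝ)
    (hVe : ∀ q ∈ B, 1/2 ≤ dot2 (V q) e) (hV2 : ∀ q ∈ B, dot2 (V q) e ≤ 2)
    (T : ℝ) (hT : 0 ≤ T) (γ : ℝ → ℝ × ℝ)
    (hγB : ∀ σ ∈ Set.Icc 0 T, γ σ ∈ B) (hγ0 : γ 0 = p)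
    (hγ' : ∀ σ ∈ Set.Icc 0 T, HasDerivWithinAt γ (V (γ σ)) (Set.Icc 0 T) σ) :
    StrictMonoOn (fun σ => dot2 (γ σ - p) e) (Set.Icc 0 T) ∧
    ContinuousOn (fun σ => dot2 (γ σ - p) e) (Set.Icc 0 T) ∧
    (∀ a ∈ Set.Icc 0 T, ∀ b ∈ Set.Icc 0 T, a ≤ b →
       (b-a)/2 ≤ dot2 (γ b - p) e - dot2 (γ a - p) e ∧
       dot2 (γ b - p) e - dot2 (γ a - p) e ≤ 2*(b-a)) ∧
    ∃ τ : ℝ → ℝ,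
      (∀ ξ ∈ Set.Icc 0 (dot2 (γ T - p) e), τ ξ ∈ Set.Icc 0 T) ∧
      (∀ ξ ∈ Set.Icc 0 (dot2 (γ T - p) e), dot2 (γ (τ ξ) - p) e = ξ) ∧
      (∀ σ ∈ Set.Icc 0 T, τ (dot2 (γ σ - p) e) = σ) ∧
      (∀ ξ ∈ Set.Icc 0 (dot2 (γ T - p) e),
        HasDerivWithinAt (fun ζ => γ (τ ζ))
          ((dot2 (V (γ (τ ξ))) e)⁻¹ • V (γ (τ ξ))) (Set.Icc 0 (dot2 (γ T - p) e)) ξ) := by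
  classical
  set x : ℝ → ℝ := fun σ => dot2 (γ σ - p) e with hxdef
  have hx' : ∀ σ ∈ Icc 0 T, HasDerivWithinAt x (dot2 (V (γ σ)) e) (Icc 0 T) σ :=
    fun σ hσ => hasDerivWithinAt_dot2_sub p e (hγ' σ hσ)
  have hxc : ContinuousOn x (Icc 0 T) := fun σ hσ => (hx' σ hσ).continuousWithinAt
  have hx0 : x 0 = 0 := by simp [hxdef, hγ0, dot2]
  have hmono : StrictMonoOn x (Icc 0 T) := by
    apply strictMonoOn_of_deriv_pos (convex_Icc 0 T) hxc
    intro σ hσ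
    rw [interior_Icc] at hσ
    have hσ' : σ ∈ Icc 0 T := Ioo_subset_Icc_self hσ
    have hd : HasDerivAt x (dot2 (V (γ σ)) e) σ :=
      (hx' σ hσ').hasDerivAt (Icc_mem_nhds hσ.1 hσ.2)
    rw [hd.deriv]; linarith [hVe (γ σ) (hγB σ hσ')]
  have hlow : ∀ a ∈ Icc 0 T, ∀ b ∈ Icc 0 T, a ≤ b → (b-a)/2 ≤ x b - x a := by
    have hm : MonotoneOn (fun σ => x σ - σ/2) (Icc 0 T) := by
      apply monotoneOn_of_deriv_nonneg (convex_Icc 0 T)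
      · exact hxc.sub (continuousOn_id.div_const 2)
      · intro σ hσ
        rw [interior_Icc] at hσ
        have hσ' : σ ∈ Icc 0 T := Ioo_subset_Icc_self hσ
        exact (((hx' σ hσ').hasDerivAt (Icc_mem_nhds hσ.1 hσ.2)).sub
          ((hasDerivAt_id σ).div_const 2)).differentiableAt.differentiableWithinAt
      · intro σ hσ
        rw [interior_Icc] at hσ
        have hσ' : σ ∈ Icc 0 T := Ioo_subset_Icc_self hσ
        have hhalf : HasDerivAt (fun s : ℝ => s/2) (1/2) σ := (hasDerivAt_id σ).div_const 2
        have hd : HasDerivAt (fun s => x s - s/2) (dot2 (V (γ σ)) e - 1/2) σ :=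
          ((hx' σ hσ').hasDerivAt (Icc_mem_nhds hσ.1 hσ.2)).sub hhalf
        rw [hd.deriv]; linarith [hVe (γ σ) (hγB σ hσ')]
    intro a ha b hb hab
    have := hm ha hb hab
    simp only [] at this
    linarith
  have hup : ∀ a ∈ Icc 0 T, ∀ b ∈ Icc 0 T, a ≤ b → x b - x a ≤ 2*(b-a) := by
    have hm : MonotoneOn (fun σ => 2*σ - x σ) (Icc 0 T) := by
      apply monotoneOn_of_deriv_nonneg (convex_Icc 0 T)
      · exact (continuousOn_const.mul continuousOn_id).sub hxc
      · intro σ hσ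
        rw [interior_Icc] at hσ
        have hσ' : σ ∈ Icc 0 T := Ioo_subset_Icc_self hσ
        exact (((hasDerivAt_id σ).const_mul 2).sub
          ((hx' σ hσ').hasDerivAt (Icc_mem_nhds hσ.1 hσ.2))).differentiableAt.differentiableWithinAt
      · intro σ hσ
        rw [interior_Icc] at hσ
        have hσ' : σ ∈ Icc 0 T := Ioo_subset_Icc_self hσ
        have h2σ : HasDerivAt (fun s : ℝ => 2*s) 2 σ := by
          simpa using (hasDerivAt_id σ).const_mul (2:ℝ)
        have hd : HasDerivAt (fun s => 2*s - x s) (2 - dot2 (V (γ σ)) e) σ :=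
          h2σ.sub ((hx' σ hσ').hasDerivAt (Icc_mem_nhds hσ.1 hσ.2))
        rw [hd.deriv]; linarith [hV2 (γ σ) (hγB σ hσ')]
    intro a ha b hb hab
    have := hm ha hb hab
    simp only [] at this
    linarith
  have hsurj : ∀ ξ ∈ Icc 0 (x T), ∃ σ, σ ∈ Icc 0 T ∧ x σ = ξ := by
    intro ξ hξ
    have h2 := intermediate_value_Icc hT hxc
    rw [hx0] at h2
    obtain ⟨σ, hσ, hxσ⟩ := h2 hξ
    exact ⟨σ, hσ, hxσ⟩
  have hex : ∃ τ : ℝ → ℝ, ∀ ξ ∈ Icc 0 (x T), τ ξ ∈ Icc 0 T ∧ x (τ ξ) = ξ :=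
    ⟨fun ξ => if h : ξ ∈ Icc 0 (x T) then (hsurj ξ h).choose else 0,
     fun ξ hξ => by dsimp only; rw [dif_pos hξ]; exact (hsurj ξ hξ).choose_spec⟩
  obtain ⟨τ, hτ⟩ := hex
  have hxmem : ∀ σ ∈ Icc 0 T, x σ ∈ Icc 0 (x T) := by
    intro σ hσ
    constructor
    · have := hlow 0 ⟨le_rfl, hT⟩ σ hσ hσ.1
      rw [hx0] at this; linarith [hσ.1]
    · exact hmono.monotoneOn hσ ⟨hT, le_rfl⟩ hσ.2
  have hlinv : ∀ σ ∈ Icc 0 T, τ (x σ) = σ := by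
    intro σ hσ
    exact hmono.injOn (hτ _ (hxmem σ hσ)).1 hσ (hτ _ (hxmem σ hσ)).2
  have hτlip : ∀ ξ ∈ Icc 0 (x T), ∀ ξ' ∈ Icc 0 (x T), |τ ξ - τ ξ'| ≤ 2*|ξ - ξ'| := by
    intro ξ hξ ξ' hξ'
    obtain ⟨hτξ, hxτξ⟩ := hτ ξ hξ
    obtain ⟨hτξ', hxτξ'⟩ := hτ ξ' hξ'
    rcases le_total (τ ξ) (τ ξ') with h | h
    · have := hlow (τ ξ) hτξ (τ ξ') hτξ' h
      rw [hxτξ, hxτξ'] at this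
      rw [abs_sub_comm, abs_of_nonneg (by linarith), abs_sub_comm]
      calc τ ξ' - τ ξ ≤ 2*(ξ' - ξ) := by linarith
      _ ≤ 2*|ξ' - ξ| := by nlinarith [le_abs_self (ξ' - ξ)]
    · have := hlow (τ ξ') hτξ' (τ ξ) hτξ h
      rw [hxτξ, hxτξ'] at this
      rw [abs_of_nonneg (by linarith)]
      calc τ ξ - τ ξ' ≤ 2*(ξ - ξ') := by linarith
      _ ≤ 2*|ξ - ξ'| := by nlinarith [le_abs_self (ξ - ξ')]
  have hτcont : ContinuousOn τ (Icc 0 (x T)) := by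
    apply LipschitzOnWith.continuousOn (K := 2)
    apply LipschitzOnWith.of_dist_le_mul
    intro ξ hξ ξ' hξ'
    rw [Real.dist_eq, Real.dist_eq]
    push_cast
    exact hτlip ξ hξ ξ' hξ'
  refine ⟨hmono, hxc, fun a ha b hb hab => ⟨hlow a ha b hb hab, hup a ha b hb hab⟩,
    τ, fun ξ hξ => (hτ ξ hξ).1, fun ξ hξ => (hτ ξ hξ).2, hlinv, ?_⟩
  intro ξ hξ
  have hApos : (0:ℝ) < dot2 (V (γ (τ ξ))) e := by
    have := hVe (γ (τ ξ)) (hγB _ (hτ ξ hξ).1)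
    linarith
  have hτd : HasDerivWithinAt τ ((dot2 (V (γ (τ ξ))) e)⁻¹) (Icc 0 (x T)) ξ :=
    hasDerivWithinAt_inv_fun hξ (fun η hη => (hτ η hη).1) (fun η hη => (hτ η hη).2)
      (hτcont.continuousWithinAt hξ) (hx' (τ ξ) (hτ ξ hξ).1) (ne_of_gt hApos)
  exact (hγ' (τ ξ) (hτ ξ hξ).1).scomp ξ hτd (fun η hη => (hτ η hη).1)


lemma core_uniqueness
    (p e n c : ℝ × ℝ) (r d L : ℝ) (hd : 0 < d) (hL : 0 ≤ L)
    (B : Set (ℝ × ℝ)) (hBdef : B = {q : ℝ × ℝ | nsq (q - p) < r^2})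
    (he : nsq e = 1) (hn : nsq n = 1) (hen : dot2 e n = 0)
    (u : ℝ × ℝ → ℝ) (F V : ℝ × ℝ → ℝ × ℝ)
    (Du : (ℝ × ℝ) → (ℝ × ℝ) →L[ℝ] ℝ) (DF : (ℝ × ℝ) → (ℝ × ℝ) →L[ℝ] ℝ × ℝ)
    (hDu : ∀ q ∈ B, HasFDerivAt u (Du q) q)
    (hDF : ∀ q ∈ B, HasFDerivAt F (DF q) q)
    (hVcont : ContinuousOn V B)
    (hV1 : ∀ q ∈ B, nsq (V q) ≤ 2)
    (hVe : ∀ q ∈ B, 1/2 ≤ dot2 (V q) e)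
    (hVn : ∀ q ∈ B, |dot2 (V q) n| ≤ 1/4)
    (horth : ∀ q ∈ B, Du q (V q) + dot2 (F q) (V q) = 0)
    (hvert : ∀ q ∈ B, d/2 ≤ Du q n + dot2 n c)
    (hFs : ∀ q ∈ B, |dot2 (F q - c) n| ≤ d/16)
    (hFlip : ∀ q ∈ B, ∀ q' ∈ B, nsq (F q - F q') ≤ L^2 * nsq (q - q'))
    (hDFb : ∀ q ∈ B, ∀ v : ℝ × ℝ, |dot2 (DF q v) n| ≤ L * Real.sqrt (nsq v))
    (T : ℝ) (hT : 0 ≤ T) (γ₁ γ₂ : ℝ → ℝ × ℝ)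
    (hγ₁B : ∀ σ ∈ Set.Icc 0 T, γ₁ σ ∈ B) (hγ₂B : ∀ σ ∈ Set.Icc 0 T, γ₂ σ ∈ B)
    (hγ₁0 : γ₁ 0 = p) (hγ₂0 : γ₂ 0 = p)
    (hγ₁' : ∀ σ ∈ Set.Icc 0 T, HasDerivWithinAt γ₁ (V (γ₁ σ)) (Set.Icc 0 T) σ)
    (hγ₂' : ∀ σ ∈ Set.Icc 0 T, HasDerivWithinAt γ₂ (V (γ₂ σ)) (Set.Icc 0 T) σ) :
    ∀ σ ∈ Set.Icc 0 T, γ₁ σ = γ₂ σ := by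
  classical
  -- derived bound on dot2 (V q) e
  have hV2 : ∀ q ∈ B, dot2 (V q) e ≤ 2 := by
    intro q hq
    have := abs_dot2_le_of_nsq_le (a := V q) (b := e) (C := 2) (c := 1)
      (by nlinarith [hV1 q hq]) (by norm_num) (by rw [he]; norm_num) (by norm_num)
    rw [mul_one] at this
    exact le_trans (le_abs_self _) this
  obtain ⟨mono₁, xc₁, bounds₁, τ₁, hτ₁mem, hτ₁rinv, hτ₁linv, hq₁d⟩ :=
    curve_package p e B V hVe hV2 T hT γ₁ hγ₁B hγ₁0 hγ₁'
  obtain ⟨mono₂, xc₂, bounds₂, τ₂, hτ₂mem, hτ₂rinv, hτ₂linv, hq₂d⟩ :=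
    curve_package p e B V hVe hV2 T hT γ₂ hγ₂B hγ₂0 hγ₂'
  set m₁ := dot2 (γ₁ T - p) e with hm₁def
  set m₂ := dot2 (γ₂ T - p) e with hm₂def
  set m := min m₁ m₂ with hmdef
  have hx₁0 : dot2 (γ₁ 0 - p) e = 0 := by simp [hγ₁0, dot2]
  have hx₂0 : dot2 (γ₂ 0 - p) e = 0 := by simp [hγ₂0, dot2]
  have hT0 : (0:ℝ) ∈ Icc 0 T := ⟨le_rfl, hT⟩
  have hTT : T ∈ Icc (0:ℝ) T := ⟨hT, le_rfl⟩
  have hm₁pos : T/2 ≤ m₁ := by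
    have := (bounds₁ 0 hT0 T hTT hT).1
    rw [hx₁0] at this; linarith
  have hm₂pos : T/2 ≤ m₂ := by
    have := (bounds₂ 0 hT0 T hTT hT).1
    rw [hx₂0] at this; linarith
  have hm0 : 0 ≤ m := le_min (by linarith) (by linarith)
  have hsub₁ : Icc (0:ℝ) m ⊆ Icc 0 m₁ := Icc_subset_Icc le_rfl (min_le_left _ _)
  have hsub₂ : Icc (0:ℝ) m ⊆ Icc 0 m₂ := Icc_subset_Icc le_rfl (min_le_right _ _)
  -- abbreviations
  set q₁ : ℝ → ℝ × ℝ := fun ξ => γ₁ (τ₁ ξ) with hq₁def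
  set q₂ : ℝ → ℝ × ℝ := fun ξ => γ₂ (τ₂ ξ) with hq₂def
  set f₁ : ℝ → ℝ := fun ξ => dot2 (q₁ ξ - p) n with hf₁def
  set f₂ : ℝ → ℝ := fun ξ => dot2 (q₂ ξ - p) n with hf₂def
  set Δ : ℝ → ℝ := fun ξ => f₁ ξ - f₂ ξ with hΔdef
  have hq₁B : ∀ ξ ∈ Icc 0 m, q₁ ξ ∈ B := fun ξ hξ => hγ₁B _ (hτ₁mem ξ (hsub₁ hξ))
  have hq₂B : ∀ ξ ∈ Icc 0 m, q₂ ξ ∈ B := fun ξ hξ => hγ₂B _ (hτ₂mem ξ (hsub₂ hξ))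
  have hq₁d' : ∀ ξ ∈ Icc 0 m, HasDerivWithinAt q₁
      ((dot2 (V (q₁ ξ)) e)⁻¹ • V (q₁ ξ)) (Icc 0 m) ξ :=
    fun ξ hξ => (hq₁d ξ (hsub₁ hξ)).mono hsub₁
  have hq₂d' : ∀ ξ ∈ Icc 0 m, HasDerivWithinAt q₂
      ((dot2 (V (q₂ ξ)) e)⁻¹ • V (q₂ ξ)) (Icc 0 m) ξ :=
    fun ξ hξ => (hq₂d ξ (hsub₂ hξ)).mono hsub₂
  have hrep₁ : ∀ ξ ∈ Icc 0 m, q₁ ξ = p + (ξ • e + f₁ ξ • n) := by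
    intro ξ hξ
    have hv := frame_decomp he hn hen (q₁ ξ - p)
    rw [hτ₁rinv ξ (hsub₁ hξ)] at hv
    have : q₁ ξ = p + (q₁ ξ - p) := by abel
    rw [this, hv]
  have hrep₂ : ∀ ξ ∈ Icc 0 m, q₂ ξ = p + (ξ • e + f₂ ξ • n) := by
    intro ξ hξ
    have hv := frame_decomp he hn hen (q₂ ξ - p)
    rw [hτ₂rinv ξ (hsub₂ hξ)] at hv
    have : q₂ ξ = p + (q₂ ξ - p) := by abel
    rw [this, hv]
  have hqdiff : ∀ ξ ∈ Icc 0 m, q₁ ξ - q₂ ξ = Δ ξ • n := by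
    intro ξ hξ
    rw [hrep₁ ξ hξ, hrep₂ ξ hξ, hΔdef]
    simp only [sub_smul]
    abel
  have hΔ0 : Δ 0 = 0 := by
    have hτ₁zero : τ₁ 0 = 0 := by
      have := hτ₁linv 0 hT0
      rwa [hx₁0] at this
    have hτ₂zero : τ₂ 0 = 0 := by
      have := hτ₂linv 0 hT0
      rwa [hx₂0] at this
    simp [hΔdef, hf₁def, hf₂def, hq₁def, hq₂def, hτ₁zero, hτ₂zero, hγ₁0, hγ₂0, dot2]
  -- derivative facts
  have hApos₁ : ∀ ξ ∈ Icc 0 m, 1/2 ≤ dot2 (V (q₁ ξ)) e := fun ξ hξ => hVe _ (hq₁B ξ hξ)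
  have hApos₂ : ∀ ξ ∈ Icc 0 m, 1/2 ≤ dot2 (V (q₂ ξ)) e := fun ξ hξ => hVe _ (hq₂B ξ hξ)
  have hf₁d : ∀ ξ ∈ Icc 0 m, HasDerivWithinAt f₁
      (dot2 ((dot2 (V (q₁ ξ)) e)⁻¹ • V (q₁ ξ)) n) (Icc 0 m) ξ :=
    fun ξ hξ => hasDerivWithinAt_dot2_sub p n (hq₁d' ξ hξ)
  have hf₂d : ∀ ξ ∈ Icc 0 m, HasDerivWithinAt f₂
      (dot2 ((dot2 (V (q₂ ξ)) e)⁻¹ • V (q₂ ξ)) n) (Icc 0 m) ξ :=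
    fun ξ hξ => hasDerivWithinAt_dot2_sub p n (hq₂d' ξ hξ)
  have hΔcont : ContinuousOn Δ (Icc 0 m) := by
    have h1 : ContinuousOn f₁ (Icc 0 m) := fun ξ hξ => (hf₁d ξ hξ).continuousWithinAt
    have h2 : ContinuousOn f₂ (Icc 0 m) := fun ξ hξ => (hf₂d ξ hξ).continuousWithinAt
    exact h1.sub h2
  -- Ξ machinery
  set U : (ℝ × ℝ) → ℝ := fun q => u q + dot2 q c with hUdef
  set Ξ : ℝ → ℝ := fun ξ => (U (q₁ ξ) - U (q₂ ξ)) + (dot2 (F (q₁ ξ) - c) n) * Δ ξ with hΞdef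
  set DΞ : ℝ → ℝ := fun ξ =>
    ((Du (q₁ ξ) ((dot2 (V (q₁ ξ)) e)⁻¹ • V (q₁ ξ))
        + dot2 ((dot2 (V (q₁ ξ)) e)⁻¹ • V (q₁ ξ)) c)
      - (Du (q₂ ξ) ((dot2 (V (q₂ ξ)) e)⁻¹ • V (q₂ ξ))
        + dot2 ((dot2 (V (q₂ ξ)) e)⁻¹ • V (q₂ ξ)) c))
    + (dot2 (DF (q₁ ξ) ((dot2 (V (q₁ ξ)) e)⁻¹ • V (q₁ ξ))) n * Δ ξ
       + dot2 (F (q₁ ξ) - c) n *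
         (dot2 ((dot2 (V (q₁ ξ)) e)⁻¹ • V (q₁ ξ)) n
           - dot2 ((dot2 (V (q₂ ξ)) e)⁻¹ • V (q₂ ξ)) n)) with hDΞdef
  have hΞd : ∀ ξ ∈ Icc 0 m, HasDerivWithinAt Ξ (DΞ ξ) (Icc 0 m) ξ := by
    intro ξ hξ
    have hU1 : HasDerivWithinAt (fun ξ => U (q₁ ξ))
        (Du (q₁ ξ) ((dot2 (V (q₁ ξ)) e)⁻¹ • V (q₁ ξ))
          + dot2 ((dot2 (V (q₁ ξ)) e)⁻¹ • V (q₁ ξ)) c) (Icc 0 m) ξ :=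
      ((hDu _ (hq₁B ξ hξ)).comp_hasDerivWithinAt ξ (hq₁d' ξ hξ)).add
        (hasDerivWithinAt_dot2' c (hq₁d' ξ hξ))
    have hU2 : HasDerivWithinAt (fun ξ => U (q₂ ξ))
        (Du (q₂ ξ) ((dot2 (V (q₂ ξ)) e)⁻¹ • V (q₂ ξ))
          + dot2 ((dot2 (V (q₂ ξ)) e)⁻¹ • V (q₂ ξ)) c) (Icc 0 m) ξ :=
      ((hDu _ (hq₂B ξ hξ)).comp_hasDerivWithinAt ξ (hq₂d' ξ hξ)).add
        (hasDerivWithinAt_dot2' c (hq₂d' ξ hξ))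
    have hh : HasDerivWithinAt (fun ξ => dot2 (F (q₁ ξ) - c) n)
        (dot2 (DF (q₁ ξ) ((dot2 (V (q₁ ξ)) e)⁻¹ • V (q₁ ξ))) n) (Icc 0 m) ξ :=
      hasDerivWithinAt_dot2_sub c n ((hDF _ (hq₁B ξ hξ)).comp_hasDerivWithinAt ξ (hq₁d' ξ hξ))
    exact (hU1.sub hU2).add (hh.mul ((hf₁d ξ hξ).sub (hf₂d ξ hξ)))
  have dot2_comm : ∀ a b : ℝ × ℝ, dot2 a b = dot2 b a := by
    intro a b; simp only [dot2]; ring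
  have hkey : ∀ q ∈ B, Du q ((dot2 (V q) e)⁻¹ • V q) + dot2 ((dot2 (V q) e)⁻¹ • V q) c
      = dot2 (c - F q) e + dot2 ((dot2 (V q) e)⁻¹ • V q) n * dot2 (c - F q) n := by
    intro q hq
    have hA : 1/2 ≤ dot2 (V q) e := hVe q hq
    have hAne : dot2 (V q) e ≠ 0 := by intro h0; rw [h0] at hA; linarith
    have h1 : Du q ((dot2 (V q) e)⁻¹ • V q) = (dot2 (V q) e)⁻¹ * Du q (V q) := by
      rw [_root_.map_smul]; simp [smul_eq_mul]
    have h2 : dot2 ((dot2 (V q) e)⁻¹ • V q) c = (dot2 (V q) e)⁻¹ * dot2 (V q) c :=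
      dot2_smul_left _ _ _
    have h2n : dot2 ((dot2 (V q) e)⁻¹ • V q) n = (dot2 (V q) e)⁻¹ * dot2 (V q) n :=
      dot2_smul_left _ _ _
    have h3 : Du q (V q) = - dot2 (F q) (V q) := by linarith [horth q hq]
    have h4 : dot2 (c - F q) (V q) = dot2 (V q) c - dot2 (F q) (V q) := by
      rw [dot2_sub_left, dot2_comm c (V q)]
    have h5 : dot2 (c - F q) (V q)
        = dot2 (V q) e * dot2 (c - F q) e + dot2 (V q) n * dot2 (c - F q) n :=
      dot2_decomp he hn hen _ _
    rw [h1, h2, h2n, h3]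
    have h6 : dot2 (V q) e * dot2 (c - F q) e + dot2 (V q) n * dot2 (c - F q) n
        = dot2 (V q) c - dot2 (F q) (V q) := by rw [← h5, h4]
    have hAA : (dot2 (V q) e)⁻¹ * dot2 (V q) e = 1 := inv_mul_cancel₀ hAne
    linear_combination (dot2 (V q) e)⁻¹ * h6.symm + dot2 (c - F q) e * hAA
  have hDΞval : ∀ ξ ∈ Icc 0 m, DΞ ξ = dot2 (F (q₂ ξ) - F (q₁ ξ)) e
      + dot2 ((dot2 (V (q₂ ξ)) e)⁻¹ • V (q₂ ξ)) n * dot2 (F (q₂ ξ) - F (q₁ ξ)) n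
      + dot2 (DF (q₁ ξ) ((dot2 (V (q₁ ξ)) e)⁻¹ • V (q₁ ξ))) n * Δ ξ := by
    intro ξ hξ
    simp only [hDΞdef]
    rw [hkey _ (hq₁B ξ hξ), hkey _ (hq₂B ξ hξ)]
    simp only [dot2_sub_left]
    ring
  have hDΞbound : ∀ ξ ∈ Icc 0 m, |DΞ ξ| ≤ 5*L*|Δ ξ| := by
    intro ξ hξ
    have hnsq21 : nsq (q₂ ξ - q₁ ξ) = (Δ ξ)^2 := by
      have h := hqdiff ξ hξ
      have h2 : q₂ ξ - q₁ ξ = -(q₁ ξ - q₂ ξ) := by abel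
      rw [h2, nsq_neg, h, nsq_smul, hn, mul_one]
    have hF21 : nsq (F (q₂ ξ) - F (q₁ ξ)) ≤ (L * |Δ ξ|)^2 := by
      have h := hFlip _ (hq₂B ξ hξ) _ (hq₁B ξ hξ)
      rw [hnsq21] at h
      nlinarith [sq_abs (Δ ξ)]
    have b1 : |dot2 (F (q₂ ξ) - F (q₁ ξ)) e| ≤ L * |Δ ξ| := by
      have := abs_dot2_le_of_nsq_le hF21 (mul_nonneg hL (abs_nonneg _))
        (by rw [he]; norm_num : nsq e ≤ (1:ℝ)^2) (by norm_num)
      simpa using this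
    have b3 : |dot2 (F (q₂ ξ) - F (q₁ ξ)) n| ≤ L * |Δ ξ| := by
      have := abs_dot2_le_of_nsq_le hF21 (mul_nonneg hL (abs_nonneg _))
        (by rw [hn]; norm_num : nsq n ≤ (1:ℝ)^2) (by norm_num)
      simpa using this
    have hA₂ := hApos₂ ξ hξ
    have hA₂inv : (dot2 (V (q₂ ξ)) e)⁻¹ ≤ 2 := by
      rw [show (2:ℝ) = (1/2)⁻¹ by norm_num]
      exact inv_anti₀ (by norm_num) hA₂
    have hA₂inv0 : 0 ≤ (dot2 (V (q₂ ξ)) e)⁻¹ := inv_nonneg.mpr (by linarith)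
    have b2 : |dot2 ((dot2 (V (q₂ ξ)) e)⁻¹ • V (q₂ ξ)) n| ≤ 1/2 := by
      rw [dot2_smul_left, abs_mul, abs_of_nonneg hA₂inv0]
      calc (dot2 (V (q₂ ξ)) e)⁻¹ * |dot2 (V (q₂ ξ)) n| ≤ 2 * (1/4) :=
        mul_le_mul hA₂inv (hVn _ (hq₂B ξ hξ)) (abs_nonneg _) (by norm_num)
      _ = 1/2 := by norm_num
    have hA₁ := hApos₁ ξ hξ
    have hA₁inv : (dot2 (V (q₁ ξ)) e)⁻¹ ≤ 2 := by
      rw [show (2:ℝ) = (1/2)⁻¹ by norm_num]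
      exact inv_anti₀ (by norm_num) hA₁
    have hA₁inv0 : 0 ≤ (dot2 (V (q₁ ξ)) e)⁻¹ := inv_nonneg.mpr (by linarith)
    have b4 : |dot2 (DF (q₁ ξ) ((dot2 (V (q₁ ξ)) e)⁻¹ • V (q₁ ξ))) n| ≤ L * 3 := by
      have h := hDFb _ (hq₁B ξ hξ) ((dot2 (V (q₁ ξ)) e)⁻¹ • V (q₁ ξ))
      have h9 : nsq ((dot2 (V (q₁ ξ)) e)⁻¹ • V (q₁ ξ)) ≤ 9 := by
        rw [nsq_smul]
        nlinarith [hV1 _ (hq₁B ξ hξ), nsq_nonneg (V (q₁ ξ))]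
      have hsqrt : Real.sqrt (nsq ((dot2 (V (q₁ ξ)) e)⁻¹ • V (q₁ ξ))) ≤ 3 := by
        calc Real.sqrt _ ≤ Real.sqrt 9 := Real.sqrt_le_sqrt h9
        _ = 3 := by
          rw [show (9:ℝ) = 3^2 by norm_num, Real.sqrt_sq (by norm_num : (0:ℝ) ≤ 3)]
      exact le_trans h (mul_le_mul_of_nonneg_left hsqrt hL)
    rw [hDΞval ξ hξ]
    have htri : |dot2 (F (q₂ ξ) - F (q₁ ξ)) e
        + dot2 ((dot2 (V (q₂ ξ)) e)⁻¹ • V (q₂ ξ)) n * dot2 (F (q₂ ξ) - F (q₁ ξ)) n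
        + dot2 (DF (q₁ ξ) ((dot2 (V (q₁ ξ)) e)⁻¹ • V (q₁ ξ))) n * Δ ξ|
        ≤ |dot2 (F (q₂ ξ) - F (q₁ ξ)) e|
        + |dot2 ((dot2 (V (q₂ ξ)) e)⁻¹ • V (q₂ ξ)) n| * |dot2 (F (q₂ ξ) - F (q₁ ξ)) n|
        + |dot2 (DF (q₁ ξ) ((dot2 (V (q₁ ξ)) e)⁻¹ • V (q₁ ξ))) n| * |Δ ξ| := by
      calc _ ≤ |dot2 (F (q₂ ξ) - F (q₁ ξ)) e
          + dot2 ((dot2 (V (q₂ ξ)) e)⁻¹ • V (q₂ ξ)) n * dot2 (F (q₂ ξ) - F (q₁ ξ)) n|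
          + |dot2 (DF (q₁ ξ) ((dot2 (V (q₁ ξ)) e)⁻¹ • V (q₁ ξ))) n * Δ ξ| := abs_add_le _ _
      _ ≤ (|dot2 (F (q₂ ξ) - F (q₁ ξ)) e|
          + |dot2 ((dot2 (V (q₂ ξ)) e)⁻¹ • V (q₂ ξ)) n * dot2 (F (q₂ ξ) - F (q₁ ξ)) n|)
          + |dot2 (DF (q₁ ξ) ((dot2 (V (q₁ ξ)) e)⁻¹ • V (q₁ ξ))) n * Δ ξ| :=
        add_le_add_left (abs_add_le _ _) _
      _ = _ := by rw [abs_mul, abs_mul]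
    have hmul1 : |dot2 ((dot2 (V (q₂ ξ)) e)⁻¹ • V (q₂ ξ)) n|
        * |dot2 (F (q₂ ξ) - F (q₁ ξ)) n| ≤ (1/2) * (L * |Δ ξ|) :=
      mul_le_mul b2 b3 (abs_nonneg _) (by norm_num)
    have hmul2 : |dot2 (DF (q₁ ξ) ((dot2 (V (q₁ ξ)) e)⁻¹ • V (q₁ ξ))) n| * |Δ ξ|
        ≤ (L * 3) * |Δ ξ| := mul_le_mul_of_nonneg_right b4 (abs_nonneg _)
    have hLΔ : 0 ≤ L * |Δ ξ| := mul_nonneg hL (abs_nonneg _)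
    refine le_trans htri ?_
    linarith [b1, hmul1, hmul2, hLΔ]
  have hlow : ∀ ξ ∈ Icc 0 m, |Δ ξ| ≤ 16/(7*d) * |Ξ ξ| := by
    intro ξ hξ
    have hq21 : q₂ ξ + Δ ξ • n = q₁ ξ := by rw [← hqdiff ξ hξ]; abel
    have hvb := vertical_bound p n c r d B hBdef u Du hDu hvert (q₂ ξ) (hq₂B ξ hξ)
      (Δ ξ) (by rw [hq21]; exact hq₁B ξ hξ)
    rw [hq21] at hvb
    have hXeq : U (q₁ ξ) - U (q₂ ξ) = Ξ ξ - dot2 (F (q₁ ξ) - c) n * Δ ξ := by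
      simp only [hΞdef]; ring
    have habs : |U (q₁ ξ) - U (q₂ ξ)| ≤ |Ξ ξ| + |dot2 (F (q₁ ξ) - c) n * Δ ξ| := by
      rw [hXeq]; exact abs_sub _ _
    have hY : |dot2 (F (q₁ ξ) - c) n * Δ ξ| ≤ d/16 * |Δ ξ| := by
      rw [abs_mul]
      exact mul_le_mul_of_nonneg_right (hFs _ (hq₁B ξ hξ)) (abs_nonneg _)
    have hUbd : d/2 * |Δ ξ| ≤ |U (q₁ ξ) - U (q₂ ξ)| := hvb
    have h7 : 7*d/16 * |Δ ξ| ≤ |Ξ ξ| := by linarith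
    have hdpos : (0:ℝ) < 7*d := by positivity
    rw [show 16/(7*d) * |Ξ ξ| = 16 * |Ξ ξ| / (7*d) by ring]
    rw [le_div_iff₀ hdpos]
    nlinarith [h7]
  -- Gronwall bootstrap
  set K := 16/(7*d) * (5*L) with hKdef
  have hK0 : 0 ≤ K := by positivity
  set δ₀ := 1/(2*K+1) with hδ₀def
  have hδ₀pos : 0 < δ₀ := by positivity
  have hKδ : K * δ₀ ≤ 1/2 := by
    rw [hδ₀def, mul_one_div, div_le_iff₀ (by positivity : (0:ℝ) < 2*K+1)]
    linarith
  have hΞeq0 : ∀ s ∈ Icc 0 m, Δ s = 0 → Ξ s = 0 := by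
    intro s hs hΔs
    have hfeq : f₁ s = f₂ s := by
      have : f₁ s - f₂ s = 0 := hΔs
      linarith
    have hq12 : q₁ s = q₂ s := by rw [hrep₁ s hs, hrep₂ s hs, hfeq]
    simp [hΞdef, hq12, hΔs]
  have hstep : ∀ s ∈ Icc 0 m, (∀ ξ ∈ Icc 0 s, Δ ξ = 0) →
      ∀ ξ ∈ Icc 0 (min m (s + δ₀)), Δ ξ = 0 := by
    intro s hs hzero
    have hsb : s ≤ min m (s + δ₀) := le_min hs.2 (by linarith)
    have hbm : min m (s + δ₀) ≤ m := min_le_left _ _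
    have hsub : Icc s (min m (s + δ₀)) ⊆ Icc 0 m :=
      fun η hη => ⟨le_trans hs.1 hη.1, le_trans hη.2 hbm⟩
    obtain ⟨ξs, hξsmem, hξsmax⟩ := isCompact_Icc.exists_isMaxOn
      (nonempty_Icc.mpr hsb) ((hΔcont.mono hsub).abs)
    have hmax : ∀ η ∈ Icc s (min m (s + δ₀)), |Δ η| ≤ |Δ ξs| := fun η hη => hξsmax hη
    have hΞs0 : Ξ s = 0 := hΞeq0 s hs (hzero s ⟨hs.1, le_rfl⟩)
    have hΞbd : ∀ η ∈ Icc s (min m (s + δ₀)), |Ξ η| ≤ 5*L*|Δ ξs| * δ₀ := by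
      intro η hη
      have hder : ∀ ζ ∈ Icc s (min m (s + δ₀)),
          HasDerivWithinAt Ξ (DΞ ζ) (Icc s (min m (s + δ₀))) ζ :=
        fun ζ hζ => (hΞd ζ (hsub hζ)).mono hsub
      have hbound : ∀ ζ ∈ Icc s (min m (s + δ₀)), ‖DΞ ζ‖ ≤ 5*L*|Δ ξs| := by
        intro ζ hζ
        rw [Real.norm_eq_abs]
        refine le_trans (hDΞbound ζ (hsub hζ)) ?_
        have h5L : (0:ℝ) ≤ 5*L := by linarith
        exact mul_le_mul_of_nonneg_left (hmax ζ hζ) h5L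
      have hmvt := Convex.norm_image_sub_le_of_norm_hasDerivWithin_le hder hbound
        (convex_Icc _ _) (left_mem_Icc.mpr hsb) hη
      rw [hΞs0, sub_zero, Real.norm_eq_abs, Real.norm_eq_abs] at hmvt
      refine le_trans hmvt ?_
      have hηs : |η - s| ≤ δ₀ := by
        rw [abs_of_nonneg (by linarith [hη.1] : (0:ℝ) ≤ η - s)]
        have := hη.2
        have := min_le_right m (s + δ₀)
        linarith
      have h5L : (0:ℝ) ≤ 5*L*|Δ ξs| := by positivity
      exact mul_le_mul_of_nonneg_left hηs h5L
    have hΔξs : |Δ ξs| = 0 := by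
      have h1 := hlow ξs (hsub hξsmem)
      have h2 := hΞbd ξs hξsmem
      have h3 : |Δ ξs| ≤ K * δ₀ * |Δ ξs| := by
        calc |Δ ξs| ≤ 16/(7*d) * |Ξ ξs| := h1
        _ ≤ 16/(7*d) * (5*L*|Δ ξs| * δ₀) :=
          mul_le_mul_of_nonneg_left h2 (by positivity)
        _ = K * δ₀ * |Δ ξs| := by rw [hKdef]; ring
      nlinarith [abs_nonneg (Δ ξs), hKδ, h3, hδ₀pos]
    intro ξ hξ
    rcases le_or_gt ξ s with h | h
    · exact hzero ξ ⟨hξ.1, h⟩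
    · have hle : |Δ ξ| ≤ |Δ ξs| := hmax ξ ⟨h.le, hξ.2⟩
      rw [hΔξs] at hle
      exact abs_eq_zero.mp (le_antisymm hle (abs_nonneg _))
  -- supremum argument
  set S := {s : ℝ | s ∈ Icc 0 m ∧ ∀ ξ ∈ Icc 0 s, Δ ξ = 0} with hSdef
  have hS0 : (0:ℝ) ∈ S := by
    refine ⟨⟨le_rfl, hm0⟩, fun ξ hξ => ?_⟩
    have : ξ = 0 := le_antisymm hξ.2 hξ.1
    rw [this]; exact hΔ0
  have hSbdd : BddAbove S := ⟨m, fun s hs => hs.1.2⟩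
  set s₀ := sSup S with hs₀def
  have hs₀mem : s₀ ∈ Icc 0 m :=
    ⟨le_csSup hSbdd hS0, csSup_le ⟨0, hS0⟩ (fun s hs => hs.1.2)⟩
  have hzero_lt : ∀ ξ, 0 ≤ ξ → ξ < s₀ → Δ ξ = 0 := by
    intro ξ hξ0 hξlt
    obtain ⟨s, hsS, hlt⟩ := exists_lt_of_lt_csSup ⟨0, hS0⟩ hξlt
    exact hsS.2 ξ ⟨hξ0, hlt.le⟩
  have hs₀zero : ∀ ξ ∈ Icc 0 s₀, Δ ξ = 0 := by
    intro ξ hξ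
    rcases lt_or_eq_of_le hξ.2 with h | h
    · exact hzero_lt ξ hξ.1 h
    · rcases eq_or_lt_of_le hξ.1 with h0 | h0
      · rw [← h0]; exact hΔ0
      · have hξm : ξ ∈ Icc 0 m := ⟨hξ.1, h ▸ hs₀mem.2⟩
        have hcw : ContinuousWithinAt Δ (Ico 0 ξ) ξ :=
          (hΔcont ξ hξm).mono (fun η hη => ⟨hη.1, le_trans hη.2.le hξm.2⟩)
        have hne : (𝓝[Ico (0:ℝ) ξ] ξ).NeBot := by
          rw [← mem_closure_iff_nhdsWithin_neBot, closure_Ico (ne_of_lt h0)]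
          exact ⟨h0.le, le_rfl⟩
        have h2 : Tendsto Δ (𝓝[Ico 0 ξ] ξ) (𝓝 (Δ ξ)) := hcw
        have h3 : Tendsto Δ (𝓝[Ico 0 ξ] ξ) (𝓝 0) := by
          apply Tendsto.congr' _ tendsto_const_nhds
          filter_upwards [self_mem_nhdsWithin] with η hη
          exact (hzero_lt η hη.1 (lt_of_lt_of_le hη.2 h.le)).symm
        exact tendsto_nhds_unique h2 h3
  have hs₀m : s₀ = m := by
    by_contra hne
    have hlt : s₀ < m := lt_of_le_of_ne hs₀mem.2 hne
    have hb := hstep s₀ hs₀mem hs₀zero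
    have hbS : min m (s₀ + δ₀) ∈ S := by
      refine ⟨⟨le_min hm0 (by linarith [hs₀mem.1]), min_le_left _ _⟩, hb⟩
    have h1 : min m (s₀ + δ₀) ≤ s₀ := le_csSup hSbdd hbS
    have h2 : s₀ < min m (s₀ + δ₀) := lt_min hlt (by linarith)
    linarith
  have hΔm : ∀ ξ ∈ Icc 0 m, Δ ξ = 0 := by
    rw [← hs₀m]; exact hs₀zero
  -- traces coincide
  have hfeq : ∀ ξ ∈ Icc 0 m, f₁ ξ = f₂ ξ := by
    intro ξ hξ
    have h := hΔm ξ hξ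
    have : f₁ ξ - f₂ ξ = 0 := h
    linarith
  have hqeq : ∀ ξ ∈ Icc 0 m, q₁ ξ = q₂ ξ := by
    intro ξ hξ
    rw [hrep₁ ξ hξ, hrep₂ ξ hξ, hfeq ξ hξ]
  -- continuous extension of the speed field
  have hq₁cont : ContinuousOn q₁ (Icc 0 m) := fun ξ hξ => (hq₁d' ξ hξ).continuousWithinAt
  have hVe_cont : ContinuousOn (fun q => dot2 (V q) e) B := by
    have h1 : ContinuousOn (fun q => (V q).1) B := continuous_fst.comp_continuousOn hVcont
    have h2 : ContinuousOn (fun q => (V q).2) B := continuous_snd.comp_continuousOn hVcont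
    have hh : ContinuousOn (fun q => (V q).1 * e.1 + (V q).2 * e.2) B :=
      (h1.mul continuousOn_const).add (h2.mul continuousOn_const)
    simpa [dot2] using hh
  set clamp : ℝ → ℝ := fun z => max 0 (min z m) with hclampdef
  have hclampcont : Continuous clamp := continuous_const.max (continuous_id.min continuous_const)
  have hclampmem : ∀ z, clamp z ∈ Icc 0 m :=
    fun z => ⟨le_max_left _ _, max_le hm0 (min_le_right _ _)⟩
  have hclampid : ∀ z ∈ Icc 0 m, clamp z = z := by
    intro z hz
    rw [hclampdef]
    dsimp only
    rw [min_eq_left hz.2, max_eq_right hz.1]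
  set g : ℝ → ℝ := fun z => dot2 (V (q₁ (clamp z))) e with hgdef
  have hgcont : Continuous g := by
    have h1 : ContinuousOn (fun ξ => dot2 (V (q₁ ξ)) e) (Icc 0 m) :=
      hVe_cont.comp hq₁cont (fun ξ hξ => hq₁B ξ hξ)
    exact h1.comp_continuous hclampcont hclampmem
  have hg12 : ∀ z, 1/2 ≤ g z := fun z => hVe _ (hq₁B _ (hclampmem z))
  have hgpos : ∀ z, 0 < g z := fun z => lt_of_lt_of_le (by norm_num) (hg12 z)
  have hginv : Continuous (fun z => (g z)⁻¹) := hgcont.inv₀ (fun z => ne_of_gt (hgpos z))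
  set Q : ℝ → ℝ := fun z => ∫ t in (0:ℝ)..z, (g t)⁻¹ with hQdef
  have hQd : ∀ z, HasDerivAt Q (g z)⁻¹ z :=
    fun z => (hginv.integral_hasStrictDerivAt 0 z).hasDerivAt
  have hQmono : StrictMono Q :=
    strictMono_of_deriv_pos (fun z => by rw [(hQd z).deriv]; exact inv_pos.mpr (hgpos z))
  have hq₁id : ∀ σ ∈ Icc 0 T, q₁ (dot2 (γ₁ σ - p) e) = γ₁ σ := by
    intro σ hσ
    rw [hq₁def]
    dsimp only
    rw [hτ₁linv σ hσ]
  have hq₂id : ∀ σ ∈ Icc 0 T, q₂ (dot2 (γ₂ σ - p) e) = γ₂ σ := by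
    intro σ hσ
    rw [hq₂def]
    dsimp only
    rw [hτ₂linv σ hσ]
  have hgid₁ : ∀ σ ∈ Icc 0 T, dot2 (γ₁ σ - p) e ∈ Icc 0 m →
      g (dot2 (γ₁ σ - p) e) = dot2 (V (γ₁ σ)) e := by
    intro σ hσ hmem
    rw [hgdef]
    dsimp only
    rw [hclampid _ hmem, hq₁id σ hσ]
  have hgid₂ : ∀ σ ∈ Icc 0 T, dot2 (γ₂ σ - p) e ∈ Icc 0 m →
      g (dot2 (γ₂ σ - p) e) = dot2 (V (γ₂ σ)) e := by
    intro σ hσ hmem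
    rw [hgdef]
    dsimp only
    rw [hclampid _ hmem, hqeq _ hmem, hq₂id σ hσ]
  -- Lemma A
  have keyA : ∀ ς ∈ Icc 0 T, dot2 (γ₁ ς - p) e ≤ m → dot2 (γ₂ ς - p) e ≤ m →
      γ₁ ς = γ₂ ς := by
    intro ς hς h1m h2m
    have hςsub : Icc 0 ς ⊆ Icc 0 T := Icc_subset_Icc le_rfl hς.2
    have hx₁m : ∀ σ ∈ Icc 0 ς, dot2 (γ₁ σ - p) e ∈ Icc 0 m := by
      intro σ hσ
      have hσT : σ ∈ Icc 0 T := hςsub hσ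
      constructor
      · have := (bounds₁ 0 hT0 σ hσT hσ.1).1
        rw [hx₁0] at this; linarith [hσ.1]
      · exact le_trans (mono₁.monotoneOn hσT hς hσ.2) h1m
    have hx₂m : ∀ σ ∈ Icc 0 ς, dot2 (γ₂ σ - p) e ∈ Icc 0 m := by
      intro σ hσ
      have hσT : σ ∈ Icc 0 T := hςsub hσ
      constructor
      · have := (bounds₂ 0 hT0 σ hσT hσ.1).1
        rw [hx₂0] at this; linarith [hσ.1]
      · exact le_trans (mono₂.monotoneOn hσT hς hσ.2) h2m
    have hZd : ∀ σ ∈ Icc 0 ς, HasDerivWithinAt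
        (fun σ => Q (dot2 (γ₁ σ - p) e) - Q (dot2 (γ₂ σ - p) e)) 0 (Icc 0 ς) σ := by
      intro σ hσ
      have hσT : σ ∈ Icc 0 T := hςsub hσ
      have hd₁ : HasDerivWithinAt (fun σ => Q (dot2 (γ₁ σ - p) e))
          ((g (dot2 (γ₁ σ - p) e))⁻¹ * dot2 (V (γ₁ σ)) e) (Icc 0 ς) σ :=
        (hQd _).comp_hasDerivWithinAt σ
          ((hasDerivWithinAt_dot2_sub p e (hγ₁' σ hσT)).mono hςsub)
      have hd₂ : HasDerivWithinAt (fun σ => Q (dot2 (γ₂ σ - p) e))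
          ((g (dot2 (γ₂ σ - p) e))⁻¹ * dot2 (V (γ₂ σ)) e) (Icc 0 ς) σ :=
        (hQd _).comp_hasDerivWithinAt σ
          ((hasDerivWithinAt_dot2_sub p e (hγ₂' σ hσT)).mono hςsub)
      have hcomb := hd₁.sub hd₂
      convert hcomb using 1 <;> try rfl
      rw [hgid₁ σ hσT (hx₁m σ hσ), hgid₂ σ hσT (hx₂m σ hσ)]
      have hne1 : dot2 (V (γ₁ σ)) e ≠ 0 := by
        have := hVe _ (hγ₁B σ hσT); intro h0; rw [h0] at this; linarith
      have hne2 : dot2 (V (γ₂ σ)) e ≠ 0 := by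
        have := hVe _ (hγ₂B σ hσT); intro h0; rw [h0] at this; linarith
      rw [inv_mul_cancel₀ hne1, inv_mul_cancel₀ hne2]
      norm_num
    have hconst := Convex.norm_image_sub_le_of_norm_hasDerivWithin_le hZd
      (fun σ _ => by simp : ∀ σ ∈ Icc 0 ς,
        ‖(0:ℝ)‖ ≤ 0) (convex_Icc _ _) (left_mem_Icc.mpr hς.1) (right_mem_Icc.mpr hς.1)
    have hZeq : Q (dot2 (γ₁ ς - p) e) - Q (dot2 (γ₂ ς - p) e)
        = Q (dot2 (γ₁ 0 - p) e) - Q (dot2 (γ₂ 0 - p) e) := by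
      have := norm_le_zero_iff.mp (by simpa using hconst)
      exact sub_eq_zero.mp this
    rw [hx₁0, hx₂0, sub_self] at hZeq
    have hQeq : Q (dot2 (γ₁ ς - p) e) = Q (dot2 (γ₂ ς - p) e) := by linarith [hZeq]
    have hxeq : dot2 (γ₁ ς - p) e = dot2 (γ₂ ς - p) e := hQmono.injective hQeq
    have hςς : ς ∈ Icc 0 ς := ⟨hς.1, le_rfl⟩
    calc γ₁ ς = q₁ (dot2 (γ₁ ς - p) e) := (hq₁id ς hς).symm
    _ = q₂ (dot2 (γ₁ ς - p) e) := hqeq _ (hx₁m ς hςς)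
    _ = q₂ (dot2 (γ₂ ς - p) e) := by rw [hxeq]
    _ = γ₂ ς := hq₂id ς hς
  -- coverage
  set W := {σ : ℝ | σ ∈ Icc 0 T ∧ dot2 (γ₁ σ - p) e ≤ m ∧ dot2 (γ₂ σ - p) e ≤ m}
    with hWdef
  have hWclosed : IsClosed W := by
    have h1 : IsClosed (Icc (0:ℝ) T ∩ (fun σ => dot2 (γ₁ σ - p) e) ⁻¹' (Iic m)) :=
      xc₁.preimage_isClosed_of_isClosed isClosed_Icc isClosed_Iic
    have h2 : IsClosed ((Icc (0:ℝ) T ∩ (fun σ => dot2 (γ₁ σ - p) e) ⁻¹' (Iic m))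
        ∩ (fun σ => dot2 (γ₂ σ - p) e) ⁻¹' (Iic m)) :=
      (xc₂.mono inter_subset_left).preimage_isClosed_of_isClosed h1 isClosed_Iic
    convert h2 using 1
    ext σ
    simp only [hWdef, mem_setOf_eq, mem_inter_iff, mem_preimage, mem_Iic]
    tauto
  have hW0 : (0:ℝ) ∈ W := ⟨hT0, by rw [hx₁0]; exact hm0, by rw [hx₂0]; exact hm0⟩
  have hWbdd : BddAbove W := ⟨T, fun σ hσ => hσ.1.2⟩
  have hσbW : sSup W ∈ W := hWclosed.csSup_mem ⟨0, hW0⟩ hWbdd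
  rcases eq_or_lt_of_le hσbW.1.2 with hσbT | hσbT
  · -- sSup W = T
    intro σ hσ
    have hx1T : dot2 (γ₁ T - p) e ≤ m := by rw [← hσbT]; exact hσbW.2.1
    have hx2T : dot2 (γ₂ T - p) e ≤ m := by rw [← hσbT]; exact hσbW.2.2
    exact keyA σ hσ (le_trans (mono₁.monotoneOn hσ hTT hσ.2) hx1T)
      (le_trans (mono₂.monotoneOn hσ hTT hσ.2) hx2T)
  · exfalso
    have hγeq : γ₁ (sSup W) = γ₂ (sSup W) := keyA _ hσbW.1 hσbW.2.1 hσbW.2.2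
    have hxeq : dot2 (γ₁ (sSup W) - p) e = dot2 (γ₂ (sSup W) - p) e := by rw [hγeq]
    rcases eq_or_lt_of_le hσbW.2.1 with hζm | hζm
    · rcases min_cases m₁ m₂ with ⟨hmm, _⟩ | ⟨hmm, _⟩
      · have hx1 : dot2 (γ₁ (sSup W) - p) e = dot2 (γ₁ T - p) e := by
          rw [hζm, hmdef, hmm]
        have := mono₁.injOn hσbW.1 hTT hx1
        exact absurd this (ne_of_lt hσbT)
      · have hζm2 : dot2 (γ₂ (sSup W) - p) e = m := by rw [← hxeq]; exact hζm
        have hx2 : dot2 (γ₂ (sSup W) - p) e = dot2 (γ₂ T - p) e := by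
          rw [hζm2, hmdef, hmm]
        have := mono₂.injOn hσbW.1 hTT hx2
        exact absurd this (ne_of_lt hσbT)
    · have hpos : 0 < (m - dot2 (γ₁ (sSup W) - p) e)/4 := by linarith
      have hσ'mem : min T (sSup W + (m - dot2 (γ₁ (sSup W) - p) e)/4) ∈ Icc 0 T :=
        ⟨le_min hT (by linarith [hσbW.1.1]), min_le_left _ _⟩
      have hσble : sSup W ≤ min T (sSup W + (m - dot2 (γ₁ (sSup W) - p) e)/4) :=
        le_min hσbW.1.2 (by linarith)
      have hub : min T (sSup W + (m - dot2 (γ₁ (sSup W) - p) e)/4)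
          ≤ sSup W + (m - dot2 (γ₁ (sSup W) - p) e)/4 := min_le_right _ _
      have hx₁σ' : dot2 (γ₁ (min T (sSup W + (m - dot2 (γ₁ (sSup W) - p) e)/4)) - p) e ≤ m := by
        have := (bounds₁ (sSup W) hσbW.1 _ hσ'mem hσble).2
        linarith
      have hx₂σ' : dot2 (γ₂ (min T (sSup W + (m - dot2 (γ₁ (sSup W) - p) e)/4)) - p) e ≤ m := by
        have := (bounds₂ (sSup W) hσbW.1 _ hσ'mem hσble).2
        rw [← hxeq] at this
        linarith
      have hσ'W : min T (sSup W + (m - dot2 (γ₁ (sSup W) - p) e)/4) ∈ W :=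
        ⟨hσ'mem, hx₁σ', hx₂σ'⟩
      have h1 := le_csSup hWbdd hσ'W
      have h2 : sSup W < min T (sSup W + (m - dot2 (γ₁ (sSup W) - p) e)/4) :=
        lt_min hσbT (by linarith)
      linarith




lemma clm_line (Φ : (ℝ × ℝ) →L[ℝ] ℝ) (v : ℝ × ℝ) :
    Φ v = v.1 * Φ (1,0) + v.2 * Φ (0,1) := by
  have hv : v = v.1 • ((1:ℝ),(0:ℝ)) + v.2 • ((0:ℝ),(1:ℝ)) := by
    apply Prod.ext <;> simp
  conv_lhs => rw [hv]
  rw [_root_.map_add, _root_.map_smul, _root_.map_smul]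
  simp [smul_eq_mul]

lemma dot2_neg_left (a w : ℝ × ℝ) : dot2 (-a) w = -dot2 a w := by
  simp only [dot2, Prod.fst_neg, Prod.snd_neg]; ring

lemma dot2_neg_right (a w : ℝ × ℝ) : dot2 a (-w) = -dot2 a w := by
  simp only [dot2, Prod.fst_neg, Prod.snd_neg]; ring

lemma dot2_comm2 (a b : ℝ × ℝ) : dot2 a b = dot2 b a := by
  simp only [dot2]; ring

lemma normsq_le_nsq (v : ℝ × ℝ) : ‖v‖^2 ≤ nsq v := by
  have h1 : ‖v‖ = max ‖v.1‖ ‖v.2‖ := rfl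
  rcases max_cases ‖v.1‖ ‖v.2‖ with ⟨hm, _⟩ | ⟨hm, _⟩ <;>
    (rw [h1, hm, Real.norm_eq_abs]; simp only [nsq, dot2];
     nlinarith [sq_abs v.1, sq_abs v.2, sq_nonneg v.1, sq_nonneg v.2])

lemma norm_le_sqrt_nsq (v : ℝ × ℝ) : ‖v‖ ≤ Real.sqrt (nsq v) := by
  have h2 : ‖v‖^2 ≤ nsq v := normsq_le_nsq v
  have := Real.sqrt_le_sqrt h2
  rwa [Real.sqrt_sq (norm_nonneg v)] at this

lemma nsq_le_two_normsq (v : ℝ × ℝ) : nsq v ≤ 2*‖v‖^2 := by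
  have h1 : |v.1| ≤ ‖v‖ := by rw [← Real.norm_eq_abs]; exact norm_fst_le v
  have h2 : |v.2| ≤ ‖v‖ := by rw [← Real.norm_eq_abs]; exact norm_snd_le v
  simp only [nsq, dot2]
  nlinarith [sq_abs v.1, sq_abs v.2, abs_nonneg v.1, abs_nonneg v.2, norm_nonneg v]



/-- **Theorem B′**: for `u, F ∈ C¹` on a nonsingular domain, characteristic curves
through a common point are locally unique (no condition on `H` needed). -/
theorem characteristic_curve_uniqueness_nonsingular
    (Ω : Set (ℝ × ℝ)) (hΩ : IsOpen Ω)
    (u : ℝ × ℝ → ℝ) (F : ℝ × ℝ → ℝ × ℝ)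
    (hu : ContDiffOn ℝ 1 u Ω) (hF : ContDiffOn ℝ 1 F Ω)
    (hns : ∀ p ∈ Ω, Dd u F p ≠ 0)
    (p : ℝ × ℝ) (hp : p ∈ Ω) :
    ∃ r₁ > (0:ℝ),
      {q : ℝ × ℝ | (q.1 - p.1) ^ 2 + (q.2 - p.2) ^ 2 < r₁ ^ 2} ⊆ Ω ∧
      ∀ I : Set ℝ, I.OrdConnected → (0:ℝ) ∈ I →
      ∀ γ₁ γ₂ : ℝ → ℝ × ℝ,
        (∀ σ ∈ I, ((γ₁ σ).1 - p.1) ^ 2 + ((γ₁ σ).2 - p.2) ^ 2 < r₁ ^ 2) →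
        (∀ σ ∈ I, ((γ₂ σ).1 - p.1) ^ 2 + ((γ₂ σ).2 - p.2) ^ 2 < r₁ ^ 2) →
        γ₁ 0 = p → γ₂ 0 = p →
        (∀ σ ∈ I, HasDerivWithinAt γ₁ (Nperp u F (γ₁ σ)) I σ) →
        (∀ σ ∈ I, HasDerivWithinAt γ₂ (Nperp u F (γ₂ σ)) I σ) →
        Set.EqOn γ₁ γ₂ I := by
  classical
  have hnsqeq : ∀ q w : ℝ × ℝ, nsq (q - w) = (q.1 - w.1)^2 + (q.2 - w.2)^2 := by
    intro q w; simp only [nsq, dot2, Prod.fst_sub, Prod.snd_sub]; ring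
  -- differentiability and continuity facts on Ω
  have hgWd : ∀ q ∈ Ω, HasFDerivAt u (fderiv ℝ u q) q := fun q hq =>
    (((hu q hq).contDiffAt (hΩ.mem_nhds hq)).differentiableAt one_ne_zero).hasFDerivAt
  have hgFd : ∀ q ∈ Ω, HasFDerivAt F (fderiv ℝ F q) q := fun q hq =>
    (((hF q hq).contDiffAt (hΩ.mem_nhds hq)).differentiableAt one_ne_zero).hasFDerivAt
  have hDucont : ContinuousOn (fun q => fderiv ℝ u q) Ω :=
    hu.continuousOn_fderiv_of_isOpen hΩ le_rfl
  have hDFcont : ContinuousOn (fun q => fderiv ℝ F q) Ω :=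
    hF.continuousOn_fderiv_of_isOpen hΩ le_rfl
  have hFcont : ContinuousOn F Ω := hF.continuousOn
  have hgradcont : ContinuousOn (fun q => gradW u F q) Ω := by
    apply ContinuousOn.prodMk
    · exact (hDucont.clm_apply continuousOn_const).add
        (continuous_fst.comp_continuousOn hFcont)
    · exact (hDucont.clm_apply continuousOn_const).add
        (continuous_snd.comp_continuousOn hFcont)
  have hDpos : ∀ q ∈ Ω, 0 < Dd u F q := fun q hq =>
    lt_of_le_of_ne (Real.sqrt_nonneg _) (Ne.symm (hns q hq))
  have hD2 : ∀ q ∈ Ω, (gradW u F q).1^2 + (gradW u F q).2^2 = (Dd u F q)^2 := by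
    intro q hq
    rw [Dd, Real.sq_sqrt (by positivity)]
  have hNunit : ∀ q ∈ Ω, nsq (Nperp u F q) = 1 := by
    intro q hq
    have hDne : Dd u F q ≠ 0 := hns q hq
    simp only [Nperp, Nu, nsq, dot2]
    field_simp
    linear_combination hD2 q hq
  have horthΩ : ∀ q ∈ Ω, dot2 (gradW u F q) (Nperp u F q) = 0 := by
    intro q hq
    have hDne : Dd u F q ≠ 0 := hns q hq
    simp only [Nperp, Nu, dot2]
    field_simp
    ring
  have hNcont : ContinuousOn (fun q => Nperp u F q) Ω := by
    have hDdcont : ContinuousOn (fun q => Dd u F q) Ω := by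
      apply Real.continuous_sqrt.comp_continuousOn
      exact ((continuous_fst.comp_continuousOn hgradcont).pow 2).add
        ((continuous_snd.comp_continuousOn hgradcont).pow 2)
    have hDne : ∀ q ∈ Ω, Dd u F q ≠ 0 := hns
    apply ContinuousOn.prodMk
    · exact (continuous_snd.comp_continuousOn hgradcont).div hDdcont hDne
    · exact ((continuous_fst.comp_continuousOn hgradcont).div hDdcont hDne).neg
  have hexpand : ∀ q ∈ Ω, ∀ w : ℝ × ℝ,
      dot2 (gradW u F q) w = fderiv ℝ u q w + dot2 (F q) w := by
    intro q hq w
    rw [clm_line (fderiv ℝ u q) w]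
    simp only [gradW, dot2]
    ring
  -- the frame at p
  have hnn : nsq (Nu u F p) = 1 := by
    have hDne : Dd u F p ≠ 0 := hns p hp
    simp only [Nu, nsq, dot2]
    field_simp
    linear_combination hD2 p hp
  have hee : nsq (Nperp u F p) = 1 := hNunit p hp
  have heen : dot2 (Nperp u F p) (Nu u F p) = 0 := by
    simp only [Nperp, Nu, dot2]
    ring
  have hgradnn : dot2 (gradW u F p) (Nu u F p) = Dd u F p := by
    have hDne : Dd u F p ≠ 0 := hns p hp
    simp only [Nu, dot2]
    field_simp
    linear_combination hD2 p hp
  -- compact neighborhood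
  obtain ⟨ε, hεpos, hεsub⟩ := Metric.isOpen_iff.mp hΩ p hp
  have hKsub : Metric.closedBall p (ε/2) ⊆ Ω := by
    refine subset_trans ?_ hεsub
    intro q hq
    rw [Metric.mem_closedBall] at hq
    rw [Metric.mem_ball]
    linarith
  have hKcomp : IsCompact (Metric.closedBall p (ε/2)) := isCompact_closedBall _ _
  have hKconv : Convex ℝ (Metric.closedBall p (ε/2)) := convex_closedBall _ _
  obtain ⟨C_F, hC_F⟩ := hKcomp.exists_bound_of_continuousOn (hDFcont.mono hKsub)
  have hC_F0 : 0 ≤ C_F :=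
    le_trans (norm_nonneg _) (hC_F p (Metric.mem_closedBall_self (by positivity)))
  have hlipK : ∀ q ∈ Metric.closedBall p (ε/2), ∀ q' ∈ Metric.closedBall p (ε/2),
      ‖F q - F q'‖ ≤ C_F * ‖q - q'‖ := by
    intro q hq q' hq'
    exact hKconv.norm_image_sub_le_of_norm_hasFDerivWithin_le
      (fun z hz => (hgFd z (hKsub hz)).hasFDerivWithinAt)
      (fun z hz => hC_F z hz) hq' hq
  -- eventual smallness conditions
  set d := Dd u F p with hddef
  have hdpos : 0 < d := hDpos p hp
  have hev : ∀ᶠ q in 𝓝 p, q ∈ Ω ∧ 3*d/4 ≤ dot2 (gradW u F q) (Nu u F p) ∧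
      nsq (F q - F p) < (d/16)^2 ∧ nsq (Nperp u F q - Nperp u F p) < (1/8)^2 := by
    have hcg : ContinuousAt (fun q => gradW u F q) p :=
      hgradcont.continuousAt (hΩ.mem_nhds hp)
    have e1 : ∀ᶠ q in 𝓝 p, q ∈ Ω := hΩ.eventually_mem hp
    have e2 : ∀ᶠ q in 𝓝 p, 3*d/4 ≤ dot2 (gradW u F q) (Nu u F p) := by
      have hc2 : ContinuousAt (fun q => dot2 (gradW u F q) (Nu u F p)) p := by
        apply ContinuousAt.add
        · exact ((continuous_fst.continuousAt.comp hcg).mul continuousAt_const)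
        · exact ((continuous_snd.continuousAt.comp hcg).mul continuousAt_const)
      have hval : 3*d/4 < dot2 (gradW u F p) (Nu u F p) := by
        rw [hgradnn]; linarith
      exact (hc2.eventually (eventually_gt_nhds hval)).mono (fun q hq => hq.le)
    have e3 : ∀ᶠ q in 𝓝 p, nsq (F q - F p) < (d/16)^2 := by
      have hc3 : ContinuousAt (fun q => nsq (F q - F p)) p := by
        have hFc : ContinuousAt F p := (hFcont.continuousAt (hΩ.mem_nhds hp))
        have h1 : ContinuousAt (fun q => (F q).1 - (F p).1) p :=
          (continuous_fst.continuousAt.comp hFc).sub continuousAt_const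
        have h2 : ContinuousAt (fun q => (F q).2 - (F p).2) p :=
          (continuous_snd.continuousAt.comp hFc).sub continuousAt_const
        have : ContinuousAt (fun q => ((F q).1 - (F p).1)*((F q).1 - (F p).1)
            + ((F q).2 - (F p).2)*((F q).2 - (F p).2)) p := (h1.mul h1).add (h2.mul h2)
        exact this
      have hval : nsq (F p - F p) < (d/16)^2 := by
        simp only [sub_self]
        have : nsq (0 : ℝ × ℝ) = 0 := by simp [nsq, dot2]
        rw [this]; positivity
      exact hc3.eventually (eventually_lt_nhds hval)
    have e4 : ∀ᶠ q in 𝓝 p, nsq (Nperp u F q - Nperp u F p) < (1/8)^2 := by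
      have hNc : ContinuousAt (fun q => Nperp u F q) p :=
        hNcont.continuousAt (hΩ.mem_nhds hp)
      have hc4 : ContinuousAt (fun q => nsq (Nperp u F q - Nperp u F p)) p := by
        have h1 : ContinuousAt (fun q => (Nperp u F q).1 - (Nperp u F p).1) p :=
          (continuous_fst.continuousAt.comp hNc).sub continuousAt_const
        have h2 : ContinuousAt (fun q => (Nperp u F q).2 - (Nperp u F p).2) p :=
          (continuous_snd.continuousAt.comp hNc).sub continuousAt_const
        have : ContinuousAt (fun q => ((Nperp u F q).1 - (Nperp u F p).1)*((Nperp u F q).1 - (Nperp u F p).1)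
            + ((Nperp u F q).2 - (Nperp u F p).2)*((Nperp u F q).2 - (Nperp u F p).2)) p := (h1.mul h1).add (h2.mul h2)
        exact this
      have hval : nsq (Nperp u F p - Nperp u F p) < (1/8)^2 := by
        simp only [sub_self]
        have : nsq (0 : ℝ × ℝ) = 0 := by simp [nsq, dot2]
        rw [this]; norm_num
      exact hc4.eventually (eventually_lt_nhds hval)
    exact e1.and (e2.and (e3.and e4))
  obtain ⟨δ, hδpos, hδ⟩ := Metric.eventually_nhds_iff.mp hev
  set r₁ := min (δ/2) (ε/4) with hr₁def
  have hr₁pos : 0 < r₁ := lt_min (by linarith) (by linarith)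
  -- ball inclusion facts
  have hBd : ∀ q : ℝ × ℝ, nsq (q - p) < r₁^2 → dist q p < r₁ := by
    intro q hq
    have h1 : dist q p = ‖q - p‖ := dist_eq_norm q p
    have h2 : ‖q - p‖ ≤ Real.sqrt (nsq (q - p)) := norm_le_sqrt_nsq _
    have h3 : Real.sqrt (nsq (q - p)) < r₁ := by
      have := Real.sqrt_lt_sqrt (nsq_nonneg _) hq
      rwa [Real.sqrt_sq hr₁pos.le] at this
    linarith
  have hBK : ∀ q : ℝ × ℝ, nsq (q - p) < r₁^2 → q ∈ Metric.closedBall p (ε/2) := by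
    intro q hq
    rw [Metric.mem_closedBall]
    have := hBd q hq
    have : dist q p < ε/4 := lt_of_lt_of_le this (min_le_right _ _)
    linarith
  have hBev : ∀ q : ℝ × ℝ, nsq (q - p) < r₁^2 → q ∈ Ω ∧
      3*d/4 ≤ dot2 (gradW u F q) (Nu u F p) ∧
      nsq (F q - F p) < (d/16)^2 ∧ nsq (Nperp u F q - Nperp u F p) < (1/8)^2 := by
    intro q hq
    apply hδ
    have := hBd q hq
    have h2 : r₁ ≤ δ/2 := min_le_left _ _
    linarith
  refine ⟨r₁, hr₁pos, ?_, ?_⟩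
  · intro q hq
    rw [mem_setOf_eq, ← hnsqeq] at hq
    exact (hBev q hq).1
  -- the interval argument
  intro I hI hI0 γ₁ γ₂ hγ₁B' hγ₂B' hγ₁0 hγ₂0 hγ₁' hγ₂'
  have hγ₁B : ∀ σ ∈ I, nsq (γ₁ σ - p) < r₁^2 := by
    intro σ hσ; rw [hnsqeq]; exact hγ₁B' σ hσ
  have hγ₂B : ∀ σ ∈ I, nsq (γ₂ σ - p) < r₁^2 := by
    intro σ hσ; rw [hnsqeq]; exact hγ₂B' σ hσ
  have hmemΩ : ∀ q : ℝ × ℝ, nsq (q - p) < r₁^2 → q ∈ Ω := fun q hq => (hBev q hq).1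
  -- Lipschitz style conditions with constant L = 2*(C_F+1)
  have hFlipB : ∀ q : ℝ × ℝ, nsq (q-p) < r₁^2 → ∀ q' : ℝ × ℝ, nsq (q'-p) < r₁^2 →
      nsq (F q - F q') ≤ (2*(C_F+1))^2 * nsq (q - q') := by
    intro q hq q' hq'
    have h1 : ‖F q - F q'‖ ≤ C_F * ‖q - q'‖ := hlipK q (hBK q hq) q' (hBK q' hq')
    have h2 := nsq_le_two_normsq (F q - F q')
    have h3 := normsq_le_nsq (q - q')
    nlinarith [norm_nonneg (F q - F q'), norm_nonneg (q - q'), hC_F0,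
      mul_self_le_mul_self (norm_nonneg (F q - F q')) h1, nsq_nonneg (q - q')]
  have hDFbB : ∀ q : ℝ × ℝ, nsq (q-p) < r₁^2 → ∀ v : ℝ × ℝ,
      |dot2 (fderiv ℝ F q v) (Nu u F p)| ≤ (2*(C_F+1)) * Real.sqrt (nsq v) := by
    intro q hq v
    have h0 : ‖fderiv ℝ F q v‖ ≤ C_F * ‖v‖ :=
      le_trans (ContinuousLinearMap.le_opNorm _ v)
        (mul_le_mul_of_nonneg_right (hC_F q (hBK q hq)) (norm_nonneg v))
    have hw : nsq (fderiv ℝ F q v) ≤ (2*(C_F+1))^2 * nsq v := by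
      have h2 := nsq_le_two_normsq (fderiv ℝ F q v)
      have h3 := normsq_le_nsq v
      nlinarith [norm_nonneg (fderiv ℝ F q v), norm_nonneg v, hC_F0,
        mul_self_le_mul_self (norm_nonneg (fderiv ℝ F q v)) h0, nsq_nonneg v]
    have h1 : |dot2 (fderiv ℝ F q v) (Nu u F p)| ≤ Real.sqrt (nsq (fderiv ℝ F q v)) * 1 := by
      have := abs_dot2_le (fderiv ℝ F q v) (Nu u F p)
      rwa [hnn, Real.sqrt_one] at this
    have h4 : Real.sqrt (nsq (fderiv ℝ F q v)) ≤ (2*(C_F+1)) * Real.sqrt (nsq v) := by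
      have := Real.sqrt_le_sqrt hw
      rwa [Real.sqrt_mul (sq_nonneg _), Real.sqrt_sq (by linarith : (0:ℝ) ≤ 2*(C_F+1))] at this
    linarith [h1, h4]
  -- pointwise conditions on the ball
  have hVeB : ∀ q : ℝ × ℝ, nsq (q-p) < r₁^2 → 1/2 ≤ dot2 (Nperp u F q) (Nperp u F p) := by
    intro q hq
    have h4 := (hBev q hq).2.2.2
    have habs : |dot2 (Nperp u F q - Nperp u F p) (Nperp u F p)| ≤ (1/8) * 1 :=
      abs_dot2_le_of_nsq_le h4.le (by norm_num) (by rw [hee]; norm_num) (by norm_num)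
    have hsplit := dot2_sub_left (Nperp u F q) (Nperp u F p) (Nperp u F p)
    have hh : dot2 (Nperp u F p) (Nperp u F p) = 1 := hee
    have := abs_le.mp habs
    linarith [hsplit, this.1]
  have hVnB : ∀ q : ℝ × ℝ, nsq (q-p) < r₁^2 → |dot2 (Nperp u F q) (Nu u F p)| ≤ 1/4 := by
    intro q hq
    have h4 := (hBev q hq).2.2.2
    have habs : |dot2 (Nperp u F q - Nperp u F p) (Nu u F p)| ≤ (1/8) * 1 :=
      abs_dot2_le_of_nsq_le h4.le (by norm_num) (by rw [hnn]; norm_num) (by norm_num)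
    have hsplit := dot2_sub_left (Nperp u F q) (Nperp u F p) (Nu u F p)
    rw [heen] at hsplit
    have h5 : dot2 (Nperp u F q) (Nu u F p) = dot2 (Nperp u F q - Nperp u F p) (Nu u F p) := by
      linarith [hsplit]
    rw [h5]
    linarith [habs]
  have horthB : ∀ q : ℝ × ℝ, nsq (q-p) < r₁^2 →
      fderiv ℝ u q (Nperp u F q) + dot2 (F q) (Nperp u F q) = 0 := by
    intro q hq
    have h1 := hexpand q (hmemΩ q hq) (Nperp u F q)
    have h2 := horthΩ q (hmemΩ q hq)
    linarith
  have hFsB : ∀ q : ℝ × ℝ, nsq (q-p) < r₁^2 → |dot2 (F q - F p) (Nu u F p)| ≤ d/16 := by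
    intro q hq
    have h3 := (hBev q hq).2.2.1
    have := abs_dot2_le_of_nsq_le h3.le (by positivity) (by rw [hnn]; norm_num : nsq (Nu u F p) ≤ (1:ℝ)^2) (by norm_num)
    simpa using this
  have hvertB : ∀ q : ℝ × ℝ, nsq (q-p) < r₁^2 →
      d/2 ≤ fderiv ℝ u q (Nu u F p) + dot2 (Nu u F p) (F p) := by
    intro q hq
    have h1 := hexpand q (hmemΩ q hq) (Nu u F p)
    have h2 := (hBev q hq).2.1
    have h3 := hFsB q hq
    have h4 := dot2_sub_left (F q) (F p) (Nu u F p)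
    have h5 : dot2 (Nu u F p) (F p) = dot2 (F p) (Nu u F p) := dot2_comm2 _ _
    have := abs_le.mp h3
    linarith [this.1, this.2]
  have hVcontB : ContinuousOn (Nperp u F) {q : ℝ × ℝ | nsq (q - p) < r₁^2} :=
    hNcont.mono (fun q hq => hmemΩ q hq)
  -- conclude
  intro σ₀ hσ₀
  rcases le_or_gt 0 σ₀ with hsgn | hsgn
  · have hIccI : Icc (0:ℝ) σ₀ ⊆ I := hI.out hI0 hσ₀
    have hcore := core_uniqueness p (Nperp u F p) (Nu u F p) (F p) r₁ d (2*(C_F+1))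
      hdpos (by linarith) {q : ℝ × ℝ | nsq (q - p) < r₁^2} rfl hee hnn heen u F
      (Nperp u F) (fun q => fderiv ℝ u q) (fun q => fderiv ℝ F q)
      (fun q hq => hgWd q (hmemΩ q hq)) (fun q hq => hgFd q (hmemΩ q hq))
      hVcontB
      (fun q hq => by rw [hNunit q (hmemΩ q hq)]; norm_num)
      (fun q hq => hVeB q hq) (fun q hq => hVnB q hq)
      (fun q hq => horthB q hq) (fun q hq => hvertB q hq) (fun q hq => hFsB q hq)
      (fun q hq q' hq' => hFlipB q hq q' hq') (fun q hq v => hDFbB q hq v)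
      σ₀ hsgn γ₁ γ₂
      (fun σ hσ => hγ₁B σ (hIccI hσ)) (fun σ hσ => hγ₂B σ (hIccI hσ)) hγ₁0 hγ₂0
      (fun σ hσ => (hγ₁' σ (hIccI hσ)).mono hIccI)
      (fun σ hσ => (hγ₂' σ (hIccI hσ)).mono hIccI)
    exact hcore σ₀ ⟨hsgn, le_rfl⟩
  · have hIccI : Icc σ₀ (0:ℝ) ⊆ I := hI.out hσ₀ hI0
    have hmemI : ∀ σ ∈ Icc (0:ℝ) (-σ₀), -σ ∈ I := by
      intro σ hσ
      exact hIccI ⟨by linarith [hσ.2], by linarith [hσ.1]⟩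
    have hVe' : ∀ q : ℝ × ℝ, nsq (q-p) < r₁^2 →
        1/2 ≤ dot2 (-(Nperp u F q)) (-(Nperp u F p)) := by
      intro q hq
      rw [dot2_neg_left, dot2_neg_right, neg_neg]
      exact hVeB q hq
    have hderiv : ∀ (γ : ℝ → ℝ × ℝ), (∀ σ ∈ I, HasDerivWithinAt γ (Nperp u F (γ σ)) I σ) →
        ∀ σ ∈ Icc (0:ℝ) (-σ₀), HasDerivWithinAt (fun σ => γ (-σ))
          (-(Nperp u F (γ (-σ)))) (Icc 0 (-σ₀)) σ := by
      intro γ hγ σ hσ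
      have hinner : HasDerivWithinAt (fun σ : ℝ => -σ) (-1) (Icc (0:ℝ) (-σ₀)) σ :=
        (hasDerivWithinAt_id σ _).neg
      have houter := hγ (-σ) (hmemI σ hσ)
      have := houter.scomp σ hinner (fun η hη => hmemI η hη)
      simp at this; exact this
    have hcore := core_uniqueness p (-(Nperp u F p)) (Nu u F p) (F p) r₁ d (2*(C_F+1))
      hdpos (by linarith) {q : ℝ × ℝ | nsq (q - p) < r₁^2} rfl
      (by rw [nsq_neg]; exact hee) hnn
      (by rw [dot2_neg_left, heen]; ring) u F
      (fun q => -(Nperp u F q)) (fun q => fderiv ℝ u q) (fun q => fderiv ℝ F q)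
      (fun q hq => hgWd q (hmemΩ q hq)) (fun q hq => hgFd q (hmemΩ q hq))
      hVcontB.neg
      (fun q hq => by rw [nsq_neg, hNunit q (hmemΩ q hq)]; norm_num)
      (fun q hq => hVe' q hq)
      (fun q hq => by rw [dot2_neg_left, abs_neg]; exact hVnB q hq)
      (fun q hq => by
        rw [_root_.map_neg, dot2_neg_right]
        have := horthB q hq
        linarith)
      (fun q hq => hvertB q hq) (fun q hq => hFsB q hq)
      (fun q hq q' hq' => hFlipB q hq q' hq') (fun q hq v => hDFbB q hq v)
      (-σ₀) (by linarith) (fun σ => γ₁ (-σ)) (fun σ => γ₂ (-σ))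
      (fun σ hσ => hγ₁B _ (hmemI σ hσ)) (fun σ hσ => hγ₂B _ (hmemI σ hσ))
      (by simpa using hγ₁0) (by simpa using hγ₂0)
      (hderiv γ₁ hγ₁') (hderiv γ₂ hγ₂')
    have := hcore (-σ₀) ⟨by linarith, le_rfl⟩
    simpa using this
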